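/- Let n ≥ 1, let P be a probability measure, and let E, H₁, …, Hₙ be measurable events with P(Hᵢ) > 0 for all i; set pᵢ = P(E|Hᵢ). If pᵢ > 0 for all i, then P(E | ⋃ᵢ Hᵢ) ≥ 1/(1 + Σᵢ (1−pᵢ)/pᵢ); and if pᵢ < 1 for all i, then P(E | ⋃ᵢ Hᵢ) ≤ (Σᵢ pᵢ/(1−pᵢ))/(1 + Σᵢ pᵢ/(1−pᵢ)). -/

import Mathlib

open MeasureTheory Set

/-- Conditional probability `P(E|H) = P(E ∩ H)/P(H)` as a real number. -/
noncomputable def condP {Ω : Type*} [MeasurableSpace Ω] (μ : Measure Ω) (E H : Set Ω) : ℝ :=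
  (μ (E ∩ H)).toReal / (μ H).toReal

theorem general_or_rule_bounds {Ω : Type*} [MeasurableSpace Ω]
    (μ : Measure Ω) [IsProbabilityMeasure μ] (n : ℕ) (hn : 1 ≤ n)
    (E : Set Ω) (H : Fin n → Set Ω)
    (hE : MeasurableSet E) (hH : ∀ i, MeasurableSet (H i))
    (hpos : ∀ i, 0 < μ (H i))
    (p : Fin n → ℝ) (hp : ∀ i, p i = condP μ E (H i)) :
    ((∀ i, 0 < p i) →
      1 / (1 + ∑ i, (1 - p i) / p i) ≤ condP μ E (⋃ i, H i)) ∧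
    ((∀ i, p i < 1) →
      condP μ E (⋃ i, H i) ≤ (∑ i, p i / (1 - p i)) / (1 + ∑ i, p i / (1 - p i))) := by
  classical
  have hfin : ∀ s : Set Ω, μ s ≠ ⊤ := fun s => measure_ne_top μ s
  set A := (μ (E ∩ ⋃ i, H i)).toReal with hAdef
  set C := (μ (Eᶜ ∩ ⋃ i, H i)).toReal with hCdef
  set a : Fin n → ℝ := fun i => (μ (E ∩ H i)).toReal with hadef
  set c : Fin n → ℝ := fun i => (μ (Eᶜ ∩ H i)).toReal with hcdef
  have hsplit : ∀ s : Set Ω, (μ s).toReal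
      = (μ (E ∩ s)).toReal + (μ (Eᶜ ∩ s)).toReal := by
    intro s
    have h := measure_inter_add_diff (μ := μ) s hE
    rw [inter_comm s E, diff_eq, inter_comm s Eᶜ] at h
    rw [← h, ENNReal.toReal_add (hfin _) (hfin _)]
  have hb : ∀ i, (μ (H i)).toReal = a i + c i := fun i => hsplit (H i)
  have hB : (μ (⋃ i, H i)).toReal = A + C := hsplit _
  have hann : ∀ i, 0 ≤ a i := fun i => ENNReal.toReal_nonneg
  have hcnn : ∀ i, 0 ≤ c i := fun i => ENNReal.toReal_nonneg
  have hAnn : 0 ≤ A := ENNReal.toReal_nonneg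
  have hCnn : 0 ≤ C := ENNReal.toReal_nonneg
  have hbpos : ∀ i, 0 < a i + c i := by
    intro i
    rw [← hb i]
    exact ENNReal.toReal_pos (hpos i).ne' (hfin _)
  have hpi : ∀ i, p i = a i / (a i + c i) := by
    intro i
    rw [hp i, condP, hb i]
  have haA : ∀ i, a i ≤ A :=
    fun i => ENNReal.toReal_mono (hfin _)
      (measure_mono (inter_subset_inter_right E (subset_iUnion H i)))
  have hcC : ∀ i, c i ≤ C :=
    fun i => ENNReal.toReal_mono (hfin _)
      (measure_mono (inter_subset_inter_right Eᶜ (subset_iUnion H i)))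
  have hAsum : A ≤ ∑ i, a i := by
    have h1 : μ (E ∩ ⋃ i, H i) ≤ ∑ i, μ (E ∩ H i) := by
      rw [inter_iUnion]
      exact measure_iUnion_fintype_le μ _
    calc A ≤ (∑ i, μ (E ∩ H i)).toReal :=
            ENNReal.toReal_mono (ENNReal.sum_ne_top.mpr fun i _ => hfin _) h1
      _ = ∑ i, a i := ENNReal.toReal_sum fun i _ => hfin _
  have hCsum : C ≤ ∑ i, c i := by
    have h1 : μ (Eᶜ ∩ ⋃ i, H i) ≤ ∑ i, μ (Eᶜ ∩ H i) := by
      rw [inter_iUnion]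
      exact measure_iUnion_fintype_le μ _
    calc C ≤ (∑ i, μ (Eᶜ ∩ H i)).toReal :=
            ENNReal.toReal_mono (ENNReal.sum_ne_top.mpr fun i _ => hfin _) h1
      _ = ∑ i, c i := ENNReal.toReal_sum fun i _ => hfin _
  have hcond : condP μ E (⋃ i, H i) = A / (A + C) := by
    rw [condP, hB]
  set i0 : Fin n := ⟨0, hn⟩
  constructor
  · -- lower bound
    intro hppos
    have hapos : ∀ i, 0 < a i := by
      intro i
      have h := hppos i
      rw [hpi i] at h
      rcases div_pos_iff.mp h with ⟨h1, _⟩ | ⟨_, h2⟩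
      · exact h1
      · exact absurd h2 (not_lt.mpr (hbpos i).le)
    have hterm : ∀ i, (1 - p i) / p i = c i / a i := by
      intro i
      rw [hpi i]
      have h1 : a i ≠ 0 := (hapos i).ne'
      have h2 : a i + c i ≠ 0 := (hbpos i).ne'
      field_simp
      ring
    have hApos : 0 < A := lt_of_lt_of_le (hapos i0) (haA i0)
    have hSnn : 0 ≤ ∑ i, c i / a i :=
      Finset.sum_nonneg fun i _ => div_nonneg (hcnn i) (hapos i).le
    rw [hcond]
    simp only [hterm]
    rw [div_le_div_iff₀ (by linarith) (by linarith)]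
    have key : C ≤ ∑ i, A * (c i / a i) := by
      refine hCsum.trans (Finset.sum_le_sum fun i _ => ?_)
      have h1 : a i * (c i / a i) ≤ A * (c i / a i) :=
        mul_le_mul_of_nonneg_right (haA i) (div_nonneg (hcnn i) (hapos i).le)
      rwa [mul_div_cancel₀ _ (hapos i).ne'] at h1
    have hmul : ∑ i, A * (c i / a i) = A * ∑ i, c i / a i := (Finset.mul_sum _ _ _).symm
    rw [hmul] at key
    nlinarith [key]
  · -- upper bound
    intro hplt
    have hcpos : ∀ i, 0 < c i := by
      intro i
      have h := hplt i
      rw [hpi i] at h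
      have := (div_lt_one (hbpos i)).mp h
      linarith
    have hterm : ∀ i, p i / (1 - p i) = a i / c i := by
      intro i
      rw [hpi i]
      have h1 : c i ≠ 0 := (hcpos i).ne'
      have h2 : a i + c i ≠ 0 := (hbpos i).ne'
      field_simp
      rw [add_sub_cancel_left, mul_div_cancel_right₀ _ h1]
    have hCpos : 0 < C := lt_of_lt_of_le (hcpos i0) (hcC i0)
    have hSnn : 0 ≤ ∑ i, a i / c i :=
      Finset.sum_nonneg fun i _ => div_nonneg (hann i) (hcpos i).le
    rw [hcond]
    simp only [hterm]
    rw [div_le_div_iff₀ (by linarith) (by linarith)]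
    have key : A ≤ ∑ i, C * (a i / c i) := by
      refine hAsum.trans (Finset.sum_le_sum fun i _ => ?_)
      have h1 : c i * (a i / c i) ≤ C * (a i / c i) :=
        mul_le_mul_of_nonneg_right (hcC i) (div_nonneg (hann i) (hcpos i).le)
      rwa [mul_div_cancel₀ _ (hcpos i).ne'] at h1
    have hmul : ∑ i, C * (a i / c i) = C * ∑ i, a i / c i := (Finset.mul_sum _ _ _).symm
    rw [hmul] at key
    nlinarith [key]
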